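/- arXiv:1312.2334 — 3 statements merged into one kernel-verified Lean document; each statement's English description precedes it below -/
import Mathlib

section
/- Soundness of garbage collection for dirt constraints: let C be a transitively closed set of dirt constraints δ ≤ δ' (viewed as a reflexive transitive relation on dirt parameters), and let N, P be sets of parameters. Define gc(C) = { (δ⁻ ≤ δ⁺) ∈ C | δ⁻ ∈ N, δ⁺ ∈ P }. Then for every solution σ' of gc(C) (an assignment of finite sets to parameters monotone on gc(C)), the substitution σ defined by σ(δ) = ⋃ { σ'(δ⁻) | δ⁻ ∈ N, (δ⁻ ≤ δ) ∈ C } is a solution of all of C, and moreover σ(δ⁺) ⊆ σ'(δ⁺) for all δ⁺ ∈ P and σ'(δ⁻) ⊆ σ(δ⁻) for all δ⁻ ∈ N. -/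
/-- Soundness of garbage collection for dirt constraints: let `R` be a reflexive and
transitive relation on dirt parameters (the transitively closed constraint set `C`),
`N, P` sets of parameters, and `gc(C)` the restriction of the constraints to pairs in
`N × P`.  Given any solution `σ'` of `gc(C)` (assigning finite sets of operations,
monotone on the kept constraints), the substitution
`σ(δ) = ⋃ { σ'(δ⁻) | δ⁻ ∈ N, (δ⁻ ≤ δ) ∈ C }` solves all of `C`, with
`σ(δ⁺) ⊆ σ'(δ⁺)` for `δ⁺ ∈ P` and `σ'(δ⁻) ⊆ σ(δ⁻)` for `δ⁻ ∈ N`. -/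
theorem gc_dirt_sound {α β : Type*} (R : α → α → Prop) (N P : Set α)
    (hrefl : Reflexive R) (htrans : Transitive R)
    (σ' : α → Finset β)
    (hσ' : ∀ a b, R a b → a ∈ N → b ∈ P → σ' a ⊆ σ' b) :
    ∀ σ : α → Set β,
      (∀ δ, σ δ = { x | ∃ n ∈ N, R n δ ∧ x ∈ σ' n }) →
      (∀ a b, R a b → σ a ⊆ σ b) ∧
      (∀ p ∈ P, σ p ⊆ (↑(σ' p) : Set β)) ∧
      (∀ n ∈ N, (↑(σ' n) : Set β) ⊆ σ n) := by
  intro σ hσ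
  refine ⟨?_, ?_, ?_⟩
  · intro a b hab x hx
    rw [hσ] at hx ⊢
    obtain ⟨n, hn, hna, hxn⟩ := hx
    exact ⟨n, hn, htrans hna hab, hxn⟩
  · intro p hp x hx
    rw [hσ] at hx
    obtain ⟨n, hn, hnp, hxn⟩ := hx
    exact hσ' n p hnp hn hp hxn
  · intro n hn x hx
    rw [hσ]
    exact ⟨n, hn, hrefl n, hx⟩
end

section
/- Soundness of garbage collection for type constraints using lattice joins: let C be a transitively closed set of constraints α ≤ α' between type parameters, all within one skeleton, and N, P sets of parameters with gc(C) = {(α⁻ ≤ α⁺) ∈ C | α⁻ ∈ N, α⁺ ∈ P}. Suppose values are taken in a lattice (e.g., closed types of a fixed shape under subtyping). Given σ' satisfying gc(C), define σ(α) = ⊔ { σ'(α⁻) | α⁻ ∈ N, (α⁻ ≤ α) ∈ C } when this index set is nonempty, and σ(α) = ⊓ { σ'(α') | α' in the skeleton } otherwise. Then σ satisfies all constraints in C, σ(α⁺) ≤ σ'(α⁺) for α⁺ ∈ P, and σ'(α⁻) ≤ σ(α⁻) for α⁻ ∈ N — provided that no parameter in N lacks an N-lower bound (which holds since α⁻ ∈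 N is its own lower bound by the implicit reflexive constraints). -/
/-- Soundness of garbage collection for type constraints using lattice joins: `R` is a
reflexive transitive set of constraints between type parameters (all in one skeleton),
`N, P` sets of parameters, and values are taken in a complete lattice.  Given `σ'`
monotone on `gc(C) = C ∩ (N × P)`, the map `σ` sending a parameter to the join of the
`σ'`-values of its `N`-lower bounds (and to the meet of all values of `σ'` when it has
no `N`-lower bound) satisfies all constraints in `C`, with `σ(α⁺) ≤ σ'(α⁺)` for
`α⁺ ∈ P` and `σ'(α⁻) ≤ σ(α⁻)` for `α⁻ ∈ N`. -/
theorem gc_type_sound {α : Type*} {L : Type*} [CompleteLattice L]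
    (R : α → α → Prop) (N P : Set α)
    (hrefl : Reflexive R) (htrans : Transitive R)
    (σ' : α → L)
    (hσ' : ∀ a b, R a b → a ∈ N → b ∈ P → σ' a ≤ σ' b) :
    ∀ σ : α → L,
      (∀ a, (∃ n ∈ N, R n a) → σ a = sSup { x | ∃ n ∈ N, R n a ∧ x = σ' n }) →
      (∀ a, (¬ ∃ n ∈ N, R n a) → σ a = sInf (Set.range σ')) →
      (∀ a b, R a b → σ a ≤ σ b) ∧
      (∀ p ∈ P, σ p ≤ σ' p) ∧
      (∀ n ∈ N, σ' n ≤ σ n) := by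
  intro σ hpos hneg
  refine ⟨?_, ?_, ?_⟩
  · intro a b hab
    by_cases ha : ∃ n ∈ N, R n a
    · obtain ⟨n, hn, hna⟩ := ha
      have hb : ∃ n ∈ N, R n b := ⟨n, hn, htrans hna hab⟩
      rw [hpos a ⟨n, hn, hna⟩, hpos b hb]
      apply sSup_le_sSup
      rintro x ⟨m, hm, hma, rfl⟩
      exact ⟨m, hm, htrans hma hab, rfl⟩
    · rw [hneg a ha]
      by_cases hb : ∃ n ∈ N, R n b
      · obtain ⟨n, hn, hnb⟩ := hb
        rw [hpos b ⟨n, hn, hnb⟩]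
        exact le_trans (sInf_le ⟨n, rfl⟩) (le_sSup ⟨n, hn, hnb, rfl⟩)
      · rw [hneg b hb]
  · intro p hp
    by_cases hpL : ∃ n ∈ N, R n p
    · rw [hpos p hpL]
      apply sSup_le
      rintro x ⟨n, hn, hnp, rfl⟩
      exact hσ' n p hnp hn hp
    · rw [hneg p hpL]
      exact sInf_le ⟨p, rfl⟩
  · intro n hn
    rw [hpos n ⟨n, hn, hrefl n⟩]
    exact le_sSup ⟨n, hn, hrefl n, rfl⟩
end

section
/- Abstract garbage collection preserves and reflects solvability with bounds: let (V, ≤_C) be a preorder given by a reflexive transitive relation C on a finite set V, N, P ⊆ V, and L a complete lattice. Then the set of L-valued monotone maps on C and the set of L-valued monotone maps on gc(C) = C ∩ (N × P) are related as follows: every monotone map on C is monotone on gc(C); and for every monotone map σ' on gc(C) there exists a monotone map σ on C with σ(p) ≤ σ'(p) for all p ∈ P and σ'(n) ≤ σ(n) for all n ∈ N. -/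
/-- Abstract garbage collection preserves and reflects solvability with bounds: for a
preorder given by a reflexive transitive relation `C` on a finite set `V`, subsets
`N, P ⊆ V` and a complete lattice `L`, every `L`-valued map monotone on `C` is
monotone on `gc(C) = C ∩ (N × P)`; and for every map `σ'` monotone on `gc(C)` there
is a map `σ` monotone on `C` with `σ(p) ≤ σ'(p)` for `p ∈ P` and `σ'(n) ≤ σ(n)`
for `n ∈ N`. -/
theorem gc_abstract {V : Type*} [Fintype V] {L : Type*} [CompleteLattice L]
    (C : V → V → Prop) (N P : Set V)
    (hrefl : Reflexive C) (htrans : Transitive C) :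
    (∀ σ : V → L, (∀ a b, C a b → σ a ≤ σ b) →
      ∀ a b, C a b → a ∈ N → b ∈ P → σ a ≤ σ b) ∧
    (∀ σ' : V → L, (∀ a b, C a b → a ∈ N → b ∈ P → σ' a ≤ σ' b) →
      ∃ σ : V → L, (∀ a b, C a b → σ a ≤ σ b) ∧
        (∀ p ∈ P, σ p ≤ σ' p) ∧ (∀ n ∈ N, σ' n ≤ σ n)) := by
  refine ⟨fun σ h a b hab _ _ => h a b hab, fun σ' h => ?_⟩
  refine ⟨fun v => ⨆ n ∈ {n | n ∈ N ∧ C n v}, σ' n, ?_, ?_, ?_⟩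
  · intro a b hab
    exact iSup_le fun n => iSup_le fun ⟨hn, hna⟩ =>
      le_iSup_of_le n (le_iSup_of_le ⟨hn, htrans hna hab⟩ le_rfl)
  · intro p hp
    exact iSup_le fun n => iSup_le fun ⟨hn, hnp⟩ => h n p hnp hn hp
  · intro n hn
    exact le_iSup_of_le n (le_iSup_of_le ⟨hn, hrefl n⟩ le_rfl)
end
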